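/- Soundness of DCila with respect to swap Kripke models: for every set of formulas Γ ∪ {φ} ⊆ For(Σ), if Γ ⊢_DCila φ then Γ ⊨_DCila φ. -/

import Mathlib

/-- Formulas over the signature Σ = {∧, ∨, →, ¬, ∘, O}, with countably many
propositional variables. -/
inductive Form : Type
  | var : ℕ → Form
  | and : Form → Form → Form
  | or : Form → Form → Form
  | imp : Form → Form → Form
  | neg : Form → Form
  | circ : Form → Form
  | obl : Form → Form

namespace Form
/-- ⊥_α := (α ∧ ¬α) ∧ ∘α -/
def bot (α : Form) : Form := (α.and α.neg).and α.circ
end Form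

/-- Theorems of DCila: the DmbC axioms (CPL⁺, (EM), (bc), (O-K), (O-E)) plus
(ci), (cl), (cf) and the propagation axioms (ca_#) for # ∈ {∧, ∨, →},
with Modus Ponens and O-necessitation. -/
inductive ThmDCila : Form → Prop
  | A1 (α β : Form) : ThmDCila (α.imp (β.imp α))
  | A2 (α β γ : Form) : ThmDCila ((α.imp (β.imp γ)).imp ((α.imp β).imp (α.imp γ)))
  | A3 (α β : Form) : ThmDCila (α.imp (β.imp (α.and β)))
  | A4 (α β : Form) : ThmDCila ((α.and β).imp α)
  | A5 (α β : Form) : ThmDCila ((α.and β).imp β)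
  | A6 (α β : Form) : ThmDCila (α.imp (α.or β))
  | A7 (α β : Form) : ThmDCila (β.imp (α.or β))
  | A8 (α β γ : Form) : ThmDCila ((α.imp γ).imp ((β.imp γ).imp ((α.or β).imp γ)))
  | A9 (α β : Form) : ThmDCila (((α.imp β).imp α).imp α)
  | EM (α : Form) : ThmDCila (α.or α.neg)
  | bc (α β : Form) : ThmDCila (α.circ.imp (α.imp (α.neg.imp β)))
  | ci (α : Form) : ThmDCila (α.circ.neg.imp (α.and α.neg))
  | cl (α : Form) : ThmDCila ((α.and α.neg).neg.imp α.circ)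
  | cf (α : Form) : ThmDCila (α.neg.neg.imp α)
  | caAnd (α β : Form) : ThmDCila ((α.circ.and β.circ).imp (α.and β).circ)
  | caOr (α β : Form) : ThmDCila ((α.circ.and β.circ).imp (α.or β).circ)
  | caImp (α β : Form) : ThmDCila ((α.circ.and β.circ).imp (α.imp β).circ)
  | OK (α β : Form) : ThmDCila ((α.imp β).obl.imp (α.obl.imp β.obl))
  | OE (α : Form) : ThmDCila (α.bot.obl.imp α.bot)
  | mp {α β : Form} : ThmDCila (α.imp β) → ThmDCila α → ThmDCila β
  | nec {α : Form} : ThmDCila α → ThmDCila α.obl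

/-- conj γ [γ₂,…,γ_k] = γ ∧ γ₂ ∧ … ∧ γ_k -/
def conj (γ : Form) : List Form → Form
  | [] => γ
  | δ :: l => γ.and (conj δ l)

/-- Γ ⊢_DCila φ iff ⊢ φ or ⊢ (γ₁ ∧ … ∧ γ_k) → φ for some γ₁,…,γ_k ∈ Γ, k ≥ 1. -/
def DerivDCila (Γ : Set Form) (φ : Form) : Prop :=
  ThmDCila φ ∨ ∃ (γ : Form) (l : List Form),
    (∀ δ ∈ γ :: l, δ ∈ Γ) ∧ ThmDCila ((conj γ l).imp φ)

/-- The three snapshots T = (1,0), t = (1,1), F = (0,1). -/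
inductive SV : Type
  | T | t | F
deriving DecidableEq

/-- First coordinate of a snapshot. -/
def SV.p1 : SV → Bool
  | .T => true | .t => true | .F => false

/-- Second coordinate of a snapshot. -/
def SV.p2 : SV → Bool
  | .T => false | .t => true | .F => true

/-- Designated values: D = {T, t}, i.e. first coordinate is 1. -/
def SV.desig (a : SV) : Prop := a.p1 = true

/-- The Boolean (classical) snapshots {T, F}. -/
def SV.boo (a : SV) : Prop := a = SV.T ∨ a = SV.F

/-- Swap Kripke model conditions for DCila on a serial frame (W,R):
the DCi conditions (with ¬ interpreted by ¬̃₁ and ∘ by ∘̃₂) plus the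
restrictions that v_w(α) = t implies v_w(α ∧ ¬α) = T, and that
v_w(α), v_w(β) ∈ {T,F} implies v_w(α # β) ∈ {T,F} for # ∈ {∧, ∨, →}. -/
structure IsModelDCila {W : Type} (R : W → W → Prop) (v : W → Form → SV) : Prop where
  serial : ∀ w, ∃ w', R w w'
  and_ : ∀ w α β, (v w (α.and β)).p1 = ((v w α).p1 && (v w β).p1)
  or_ : ∀ w α β, (v w (α.or β)).p1 = ((v w α).p1 || (v w β).p1)
  imp_ : ∀ w α β, (v w (α.imp β)).p1 = (!(v w α).p1 || (v w β).p1)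
  neg_ : ∀ w α, (v w α.neg).p1 = (v w α).p2 ∧ (v w α.neg).p2 ≤ (v w α).p1
  circ_ : ∀ w α, (v w α.circ).p1 = !((v w α).p1 && (v w α).p2) ∧
    (v w α.circ).p2 = ((v w α).p1 && (v w α).p2)
  obl_ : ∀ w α, ((v w α.obl).p1 = true ↔ ∀ w', R w w' → (v w' α).p1 = true)
  cl_ : ∀ w α, v w α = SV.t → v w (α.and α.neg) = SV.T
  booAnd : ∀ w α β, (v w α).boo → (v w β).boo → (v w (α.and β)).boo
  booOr : ∀ w α β, (v w α).boo → (v w β).boo → (v w (α.or β)).boo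
  booImp : ∀ w α β, (v w α).boo → (v w β).boo → (v w (α.imp β)).boo

/-- Γ ⊨_DCila φ : semantic consequence over all swap Kripke models for DCila. -/
def SemDCila (Γ : Set Form) (φ : Form) : Prop :=
  ∀ (W : Type) (R : W → W → Prop) (v : W → Form → SV), Nonempty W →
    IsModelDCila R v → ∀ w : W, (∀ γ ∈ Γ, (v w γ).desig) → (v w φ).desig

lemma SV.p1_or_p2 (a : SV) : (a.p1 || a.p2) = true := by cases a <;> rfl

lemma SV.eq_t (a : SV) (h1 : a.p1 = true) (h2 : a.p2 = true) : a = SV.t := by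
  cases a <;> simp_all [SV.p1, SV.p2]

lemma SV.boo_iff (a : SV) : a.boo ↔ (a.p1 && a.p2) = false := by
  cases a <;> simp [SV.boo, SV.p1, SV.p2]

lemma thm_valid {W : Type} {R : W → W → Prop} {v : W → Form → SV}
    (M : IsModelDCila R v) {φ : Form} (h : ThmDCila φ) :
    ∀ w, (v w φ).p1 = true := by
  induction h with
  | A1 α β =>
      intro w; simp only [M.imp_]
      cases (v w α).p1 <;> cases (v w β).p1 <;> simp
  | A2 α β γ =>
      intro w; simp only [M.imp_]
      cases (v w α).p1 <;> cases (v w β).p1 <;> cases (v w γ).p1 <;> simp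
  | A3 α β =>
      intro w; simp only [M.imp_, M.and_]
      cases (v w α).p1 <;> cases (v w β).p1 <;> simp
  | A4 α β =>
      intro w; simp only [M.imp_, M.and_]
      cases (v w α).p1 <;> cases (v w β).p1 <;> simp
  | A5 α β =>
      intro w; simp only [M.imp_, M.and_]
      cases (v w α).p1 <;> cases (v w β).p1 <;> simp
  | A6 α β =>
      intro w; simp only [M.imp_, M.or_]
      cases (v w α).p1 <;> cases (v w β).p1 <;> simp
  | A7 α β =>
      intro w; simp only [M.imp_, M.or_]
      cases (v w α).p1 <;> cases (v w β).p1 <;> simp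
  | A8 α β γ =>
      intro w; simp only [M.imp_, M.or_]
      cases (v w α).p1 <;> cases (v w β).p1 <;> cases (v w γ).p1 <;> simp
  | A9 α β =>
      intro w; simp only [M.imp_]
      cases (v w α).p1 <;> cases (v w β).p1 <;> simp
  | EM α =>
      intro w
      rw [M.or_, (M.neg_ w α).1]
      exact SV.p1_or_p2 _
  | bc α β =>
      intro w; simp only [M.imp_]
      rw [(M.circ_ w α).1, (M.neg_ w α).1]
      cases (v w α).p1 <;> cases (v w α).p2 <;> simp
  | ci α =>
      intro w; simp only [M.imp_, M.and_]
      rw [(M.neg_ w α.circ).1, (M.circ_ w α).2, (M.neg_ w α).1]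
      cases (v w α).p1 <;> cases (v w α).p2 <;> simp
  | cl α =>
      intro w; simp only [M.imp_]
      rw [(M.neg_ w (α.and α.neg)).1, (M.circ_ w α).1]
      by_cases h : (v w α).p1 = true ∧ (v w α).p2 = true
      · have ht := M.cl_ w α (SV.eq_t _ h.1 h.2)
        rw [ht]; simp [SV.p2]
      · have hf : ((v w α).p1 && (v w α).p2) = false := by
          cases h1 : (v w α).p1 <;> cases h2 : (v w α).p2 <;> simp_all
        rw [hf]; simp
  | cf α =>
      intro w; simp only [M.imp_]
      rw [(M.neg_ w α.neg).1]
      have h2 := (M.neg_ w α).2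
      revert h2
      cases (v w α.neg).p2 <;> cases (v w α).p1 <;> decide
  | caAnd α β =>
      intro w; simp only [M.imp_, M.and_]
      rw [(M.circ_ w α).1, (M.circ_ w β).1, (M.circ_ w (α.and β)).1]
      by_cases ha : ((v w α).p1 && (v w α).p2) = true
      · rw [ha]; simp
      by_cases hb : ((v w β).p1 && (v w β).p2) = true
      · rw [hb]; simp
      have hC := M.booAnd w α β ((SV.boo_iff _).2 (Bool.eq_false_iff.mpr ha))
        ((SV.boo_iff _).2 (Bool.eq_false_iff.mpr hb))
      rw [(SV.boo_iff _).1 hC]; simp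
  | caOr α β =>
      intro w; simp only [M.imp_, M.and_]
      rw [(M.circ_ w α).1, (M.circ_ w β).1, (M.circ_ w (α.or β)).1]
      by_cases ha : ((v w α).p1 && (v w α).p2) = true
      · rw [ha]; simp
      by_cases hb : ((v w β).p1 && (v w β).p2) = true
      · rw [hb]; simp
      have hC := M.booOr w α β ((SV.boo_iff _).2 (Bool.eq_false_iff.mpr ha))
        ((SV.boo_iff _).2 (Bool.eq_false_iff.mpr hb))
      rw [(SV.boo_iff _).1 hC]; simp
  | caImp α β =>
      intro w; simp only [M.imp_, M.and_]
      rw [(M.circ_ w α).1, (M.circ_ w β).1, (M.circ_ w (α.imp β)).1]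
      by_cases ha : ((v w α).p1 && (v w α).p2) = true
      · rw [ha]; simp
      by_cases hb : ((v w β).p1 && (v w β).p2) = true
      · rw [hb]; simp
      have hC := M.booImp w α β ((SV.boo_iff _).2 (Bool.eq_false_iff.mpr ha))
        ((SV.boo_iff _).2 (Bool.eq_false_iff.mpr hb))
      rw [(SV.boo_iff _).1 hC]; simp
  | OK α β =>
      intro w; simp only [M.imp_]
      cases h1 : (v w (α.imp β).obl).p1
      · simp
      cases h2 : (v w α.obl).p1
      · simp
      have h3 : (v w β.obl).p1 = true := by
        rw [M.obl_]
        intro w' hw'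
        have hi := (M.obl_ w (α.imp β)).1 h1 w' hw'
        have hA := (M.obl_ w α).1 h2 w' hw'
        rw [M.imp_, hA] at hi
        simpa using hi
      rw [h3]; simp
  | OE α =>
      intro w; simp only [M.imp_]
      have hbot : ∀ w', (v w' α.bot).p1 = false := by
        intro w'
        show (v w' ((α.and α.neg).and α.circ)).p1 = false
        rw [M.and_, M.and_, (M.neg_ w' α).1, (M.circ_ w' α).1]
        cases (v w' α).p1 <;> cases (v w' α).p2 <;> rfl
      obtain ⟨w', hw'⟩ := M.serial w
      have hO : (v w α.bot.obl).p1 = false := by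
        cases h : (v w α.bot.obl).p1
        · rfl
        · have := (M.obl_ w α.bot).1 h w' hw'
          rw [hbot w'] at this
          exact this.symm
      rw [hO]; simp
  | mp hab ha ihab iha =>
      intro w
      have h := ihab w
      rw [M.imp_, iha w] at h
      simpa using h
  | nec h ih =>
      intro w
      rw [M.obl_]
      intro w' _
      exact ih w'

lemma conj_p1 {W : Type} {R : W → W → Prop} {v : W → Form → SV}
    (M : IsModelDCila R v) (w : W) :
    ∀ (l : List Form) (γ : Form), (v w γ).p1 = true →
      (∀ δ ∈ l, (v w δ).p1 = true) → (v w (conj γ l)).p1 = true := by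
  intro l
  induction l with
  | nil => intro γ hγ _; exact hγ
  | cons δ l ih =>
      intro γ hγ hl
      show (v w (γ.and (conj δ l))).p1 = true
      rw [M.and_, hγ, ih δ (hl δ (by simp)) (fun ε hε => hl ε (by simp [hε]))]
      rfl

/-- Soundness of DCila w.r.t. swap Kripke models. -/
theorem DCila_soundness (Γ : Set Form) (φ : Form) :
    DerivDCila Γ φ → SemDCila Γ φ := by
  intro h W R v hW M w hΓ
  rcases h with h | ⟨γ, l, hmem, hthm⟩
  · exact thm_valid M h w
  · have hi := thm_valid M hthm w
    rw [M.imp_] at hi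
    have hc : (v w (conj γ l)).p1 = true :=
      conj_p1 M w l γ (hΓ γ (hmem γ (by simp)))
        (fun δ hδ => hΓ δ (hmem δ (by simp [hδ])))
    rw [hc] at hi
    exact (by simpa using hi : (v w φ).p1 = true)
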